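/- Let Z ~ N(μ_z, σ_z²) and Y ~ N(0, σ_y²) be independent, σ_z, σ_y > 0. In the Kyle equilibrium with X(Z) = (σ_y/σ_z)(Z − μ_z) and P(v) = μ_z + (σ_z/(2σ_y)) v, the market maker breaks even in expectation: E[(Z − P(X(Z)+Y))·(X(Z)+Y)] = 0. -/

import Mathlib

open MeasureTheory ProbabilityTheory Real Filter Set
open scoped NNReal ENNReal

private lemma tendsto_mul_exp_neg_mul_sq_atTop {b : ℝ} (hb : 0 < b) :
    Tendsto (fun x : ℝ => x * Real.exp (-b * x ^ 2)) atTop (nhds 0) := by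
  have h := rpow_mul_exp_neg_mul_sq_isLittleO_exp_neg hb 1
  have h2 : Tendsto (fun x : ℝ => Real.exp (-(1/2) * x)) atTop (nhds 0) := by
    have : Tendsto (fun x : ℝ => -(1/2) * x) atTop atBot := by
      apply Filter.Tendsto.const_mul_atTop_of_neg (by norm_num) tendsto_id
    exact Real.tendsto_exp_atBot.comp this
  have := h.tendsto_zero_of_tendsto h2
  simpa [Real.rpow_one] using this

private lemma integral_sq_mul_exp_neg_mul_sq {b : ℝ} (hb : 0 < b) :
    (∫ x : ℝ, x ^ 2 * Real.exp (-b * x ^ 2)) = Real.sqrt (π / b) / (2 * b) := by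
  set F : ℝ → ℝ := fun x => -(x / (2 * b)) * Real.exp (-b * x ^ 2) with hF
  set f' : ℝ → ℝ :=
    fun x => x ^ 2 * Real.exp (-b * x ^ 2) - (2 * b)⁻¹ * Real.exp (-b * x ^ 2) with hf'
  have hbne : (2 : ℝ) * b ≠ 0 := by positivity
  have hder : ∀ x : ℝ, HasDerivAt F (f' x) x := by
    intro x
    have h1 : HasDerivAt (fun x : ℝ => Real.exp (-b * x ^ 2)) (-b * (2 * x) *
        Real.exp (-b * x ^ 2)) x := by
      have := ((hasDerivAt_pow 2 x).const_mul (-b)).exp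
      simpa [mul_comm, mul_assoc, mul_left_comm] using this
    have h2 : HasDerivAt (fun x : ℝ => -(x / (2 * b))) (-(1 / (2 * b))) x := by
      simpa using ((hasDerivAt_id x).div_const (2 * b)).fun_neg
    have := h2.fun_mul h1
    refine this.congr_deriv ?_
    simp only [hf']
    field_simp
    ring
  have hint_sq : Integrable (fun x : ℝ => x ^ 2 * Real.exp (-b * x ^ 2)) := by
    have := integrable_rpow_mul_exp_neg_mul_sq hb (s := 2) (by norm_num)
    have h2 : ∀ x : ℝ, x ^ (2 : ℝ) = x ^ (2 : ℕ) := fun x => by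
      rw [show (2 : ℝ) = ((2 : ℕ) : ℝ) by norm_num, Real.rpow_natCast]
    simpa [h2] using this
  have hint_e : Integrable (fun x : ℝ => Real.exp (-b * x ^ 2)) :=
    integrable_exp_neg_mul_sq hb
  have hint_f' : Integrable f' := hint_sq.sub (hint_e.const_mul _)
  have htop : Tendsto F atTop (nhds 0) := by
    have := (tendsto_mul_exp_neg_mul_sq_atTop hb).const_mul (-(2 * b)⁻¹)
    simp only [mul_zero] at this
    refine this.congr fun x => ?_
    simp [hF]; ring
  have hbot : Tendsto F atBot (nhds 0) := by
    have h1 : Tendsto (fun x : ℝ => F (-x)) atTop (nhds 0) := by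
      have := (tendsto_mul_exp_neg_mul_sq_atTop hb).const_mul ((2 * b)⁻¹)
      simp only [mul_zero] at this
      refine this.congr fun x => ?_
      simp [hF]; ring
    have := h1.comp tendsto_neg_atBot_atTop
    simpa [Function.comp_def, neg_neg] using this
  have hF0 : F 0 = 0 := by simp [hF]
  have hIoi : (∫ x in Ioi (0:ℝ), f' x) = 0 := by
    rw [integral_Ioi_of_hasDerivAt_of_tendsto' (fun x _ => hder x)
      hint_f'.integrableOn htop, hF0, sub_zero]
  have hIic : (∫ x in Iic (0:ℝ), f' x) = 0 := by
    rw [integral_Iic_of_hasDerivAt_of_tendsto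
      (hder 0).continuousAt.continuousWithinAt (fun x _ => hder x)
      hint_f'.integrableOn hbot, hF0, zero_sub, neg_zero]
  have htot : (∫ x : ℝ, f' x) = 0 := by
    rw [← integral_add_compl (measurableSet_Iic (a := (0:ℝ))) hint_f', compl_Iic,
      hIic, hIoi, add_zero]
  have hsub : (∫ x : ℝ, f' x) = (∫ x : ℝ, x ^ 2 * Real.exp (-b * x ^ 2))
      - ∫ x : ℝ, (2 * b)⁻¹ * Real.exp (-b * x ^ 2) :=
    integral_sub hint_sq (hint_e.const_mul _)
  have hce : (∫ x : ℝ, (2 * b)⁻¹ * Real.exp (-b * x ^ 2))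
      = (2 * b)⁻¹ * Real.sqrt (π / b) := by
    rw [integral_const_mul, integral_gaussian]
  rw [htot] at hsub
  have := sub_eq_zero.mp hsub.symm
  rw [this, hce, div_eq_mul_inv]
  ring

private lemma integrable_sq_sub_gaussianReal (m : ℝ) {v : ℝ≥0} (hv : v ≠ 0) :
    Integrable (fun x => (x - m) ^ 2) (gaussianReal m v) := by
  have hv' : 0 < (v : ℝ) := by positivity
  have hb : 0 < (2 * (v : ℝ))⁻¹ := by positivity
  rw [gaussianReal_of_var_ne_zero m hv]
  rw [integrable_withDensity_iff (measurable_gaussianPDF m v)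
    (ae_of_all _ fun x => ENNReal.ofReal_lt_top)]
  have heq : ∀ x : ℝ, (x - m) ^ 2 * (gaussianPDF m v x).toReal
      = (Real.sqrt (2 * π * v))⁻¹ *
        ((x - m) ^ 2 * Real.exp (-(2 * (v : ℝ))⁻¹ * (x - m) ^ 2)) := by
    intro x
    rw [gaussianPDF, ENNReal.toReal_ofReal (gaussianPDFReal_nonneg m v x),
      gaussianPDFReal]
    rw [show -(x - m) ^ 2 / (2 * (v : ℝ)) = -(2 * (v : ℝ))⁻¹ * (x - m) ^ 2 by
      field_simp]
    ring
  simp only [heq]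
  have hint : Integrable (fun x : ℝ => x ^ 2 * Real.exp (-(2 * (v : ℝ))⁻¹ * x ^ 2)) := by
    have := integrable_rpow_mul_exp_neg_mul_sq hb (s := 2) (by norm_num)
    have h2 : ∀ x : ℝ, x ^ (2 : ℝ) = x ^ (2 : ℕ) := fun x => by
      rw [show (2 : ℝ) = ((2 : ℕ) : ℝ) by norm_num, Real.rpow_natCast]
    simpa [h2] using this
  exact (hint.comp_sub_right m).const_mul _

private lemma integral_sq_sub_gaussianReal (m : ℝ) {v : ℝ≥0} (hv : v ≠ 0) :
    (∫ x, (x - m) ^ 2 ∂(gaussianReal m v)) = (v : ℝ) := by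
  have hv' : 0 < (v : ℝ) := by positivity
  set b : ℝ := (2 * (v : ℝ))⁻¹ with hbdef
  have hb : 0 < b := by positivity
  rw [gaussianReal_of_var_ne_zero m hv, gaussianPDF_def]
  have hcoe : ∀ x : ℝ, ENNReal.ofReal (gaussianPDFReal m v x)
      = ((gaussianPDFReal m v x).toNNReal : ℝ≥0∞) := fun x => rfl
  simp only [hcoe]
  rw [integral_withDensity_eq_integral_smul
    (measurable_gaussianPDFReal m v).real_toNNReal]
  have heq : ∀ x : ℝ, (gaussianPDFReal m v x).toNNReal • ((x - m) ^ 2)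
      = (fun t => (Real.sqrt (2 * π * v))⁻¹ * (t ^ 2 * Real.exp (-b * t ^ 2))) (x - m) := by
    intro x
    rw [NNReal.smul_def, smul_eq_mul, Real.coe_toNNReal _ (gaussianPDFReal_nonneg m v x),
      gaussianPDFReal]
    rw [show -(x - m) ^ 2 / (2 * (v : ℝ)) = -b * (x - m) ^ 2 by
      rw [hbdef]; field_simp]
    ring
  simp only [heq]
  rw [integral_sub_right_eq_self (μ := volume)
    (fun t => (Real.sqrt (2 * π * v))⁻¹ * (t ^ 2 * Real.exp (-b * t ^ 2))) m]
  rw [integral_const_mul, integral_sq_mul_exp_neg_mul_sq hb]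
  have hπb : π / b = 2 * π * v := by rw [hbdef]; field_simp
  rw [hπb]
  have hs : Real.sqrt (2 * π * v) ≠ 0 := by
    refine ne_of_gt (Real.sqrt_pos.mpr ?_)
    have := Real.pi_pos
    positivity
  rw [hbdef]
  field_simp

/-- In the Kyle equilibrium the market maker breaks even in expectation:
`E[(Z − P(X(Z)+Y))·(X(Z)+Y)] = 0`. -/
theorem kyle_market_maker_breaks_even
    {Ω : Type*} [MeasurableSpace Ω] (μpr : Measure Ω) [IsProbabilityMeasure μpr]
    (Z Y : Ω → ℝ) (hZm : Measurable Z) (hYm : Measurable Y)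
    (μz σz σy : ℝ) (hσz : 0 < σz) (hσy : 0 < σy)
    (hZ : Measure.map Z μpr = gaussianReal μz (Real.toNNReal (σz ^ 2)))
    (hY : Measure.map Y μpr = gaussianReal 0 (Real.toNNReal (σy ^ 2)))
    (hindep : IndepFun Z Y μpr)
    (X : ℝ → ℝ) (hX : ∀ z, X z = (σy / σz) * (z - μz))
    (P : ℝ → ℝ) (hP : ∀ v, P v = μz + (σz / (2 * σy)) * v) :
    (∫ ω, (Z ω - P (X (Z ω) + Y ω)) * (X (Z ω) + Y ω) ∂μpr) = 0 := by
  have hσz' : σz ≠ 0 := ne_of_gt hσz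
  have hσy' : σy ≠ 0 := ne_of_gt hσy
  have hvz : (Real.toNNReal (σz ^ 2)) ≠ 0 := by
    simp [Real.toNNReal_eq_zero, not_le, pow_pos hσz, hσz']
  have hvy : (Real.toNNReal (σy ^ 2)) ≠ 0 := by
    simp [Real.toNNReal_eq_zero, not_le, pow_pos hσy, hσy']
  have hvzc : ((Real.toNNReal (σz ^ 2)) : ℝ) = σz ^ 2 :=
    Real.coe_toNNReal _ (sq_nonneg σz)
  have hvyc : ((Real.toNNReal (σy ^ 2)) : ℝ) = σy ^ 2 :=
    Real.coe_toNNReal _ (sq_nonneg σy)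
  -- second moments via the map measures
  have hgZ : AEStronglyMeasurable (fun x : ℝ => (x - μz) ^ 2) (Measure.map Z μpr) :=
    (((measurable_id.sub measurable_const).pow_const 2).aestronglyMeasurable)
  have hgY : AEStronglyMeasurable (fun x : ℝ => (x - 0) ^ 2) (Measure.map Y μpr) :=
    (((measurable_id.sub measurable_const).pow_const 2).aestronglyMeasurable)
  have hZint : Integrable (fun ω => (Z ω - μz) ^ 2) μpr := by
    have := (integrable_map_measure hgZ hZm.aemeasurable).mp
      (by rw [hZ]; exact integrable_sq_sub_gaussianReal μz hvz)
    simpa [Function.comp_def] using this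
  have hYint : Integrable (fun ω => (Y ω) ^ 2) μpr := by
    have := (integrable_map_measure hgY hYm.aemeasurable).mp
      (by rw [hY]; exact integrable_sq_sub_gaussianReal 0 hvy)
    simpa [Function.comp_def] using this
  have hZ2 : (∫ ω, (Z ω - μz) ^ 2 ∂μpr) = σz ^ 2 := by
    have := integral_map hZm.aemeasurable hgZ (f := fun x : ℝ => (x - μz) ^ 2)
    rw [← this, hZ, integral_sq_sub_gaussianReal μz hvz, hvzc]
  have hY2 : (∫ ω, (Y ω) ^ 2 ∂μpr) = σy ^ 2 := by
    have := integral_map hYm.aemeasurable hgY (f := fun x : ℝ => (x - 0) ^ 2)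
    simp only [sub_zero] at this
    rw [← this, hY]
    have := integral_sq_sub_gaussianReal 0 hvy
    simp only [sub_zero] at this
    rw [this, hvyc]
  -- pointwise simplification of the integrand
  have hfun : ∀ ω, (Z ω - P (X (Z ω) + Y ω)) * (X (Z ω) + Y ω)
      = (σy / (2 * σz)) * (Z ω - μz) ^ 2 - (σz / (2 * σy)) * (Y ω) ^ 2 := by
    intro ω
    rw [hX, hP]
    field_simp
    ring
  calc (∫ ω, (Z ω - P (X (Z ω) + Y ω)) * (X (Z ω) + Y ω) ∂μpr)
      = ∫ ω, ((σy / (2 * σz)) * (Z ω - μz) ^ 2 - (σz / (2 * σy)) * (Y ω) ^ 2) ∂μpr := by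
        exact integral_congr_ae (ae_of_all _ hfun)
    _ = (σy / (2 * σz)) * (∫ ω, (Z ω - μz) ^ 2 ∂μpr)
        - (σz / (2 * σy)) * (∫ ω, (Y ω) ^ 2 ∂μpr) := by
        rw [integral_sub (hZint.const_mul _) (hYint.const_mul _),
          integral_const_mul, integral_const_mul]
    _ = 0 := by
        rw [hZ2, hY2]; field_simp; ring
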